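/- Let G be a simple graph with n ≥ 2 vertices, let k ∈ {1,…,n−1}, and let v₁, v₂, …, v_k be a path in G such that F(v₁,…,v_k) = N(v_k) \ {v₁,…,v_{k−1}} is nonempty. Then the number of cycles of G containing the path v₁⋯v_k is at most f(v₁,…,v_k) times the maximum, over all t with k+1 ≤ t ≤ n and all choices of vertices v_{k+1} ∈ F(v₁,…,v_k), v_{k+2} ∈ F(v₁,…,v_{k+1}), …, v_t ∈ F(v₁,…,v_{t−1}), of the product f(v₁,…,v_{k+1})·f(v₁,…,v_{k+2})⋯f(v₁,…,v_t). -/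
import Mathlib


/-- A subgraph of a simple graph is a cycle subgraph if it is connected (hence nonempty)
and every one of its vertices has exactly two neighbours in it. -/
def SimpleGraph.Subgraph.IsCycleSub {V : Type*} {G : SimpleGraph V} (H : G.Subgraph) : Prop :=
  H.coe.Connected ∧ ∀ v ∈ H.verts, (H.neighborSet v).ncard = 2

/-- `C(G)`: the number of cycles in a simple graph `G`, i.e. the number of distinct
subgraphs of `G` that are cycles. -/
noncomputable def SimpleGraph.cycleCount {V : Type*} (G : SimpleGraph V) : ℕ :=
  {H : G.Subgraph | H.IsCycleSub}.ncard

/-- `C(m)`: the maximum number of cycles in a simple graph with `m` edges. -/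
noncomputable def maxCycles (m : ℕ) : ℕ :=
  sSup {c : ℕ | ∃ (n : ℕ) (G : SimpleGraph (Fin n)), G.edgeSet.ncard = m ∧ c = G.cycleCount}

set_option linter.unusedSectionVars false

namespace CyclesAux

open SimpleGraph

lemma subgraph_finite {V : Type*} [Finite V] (G : SimpleGraph V) : Finite G.Subgraph := by
  apply Finite.of_injective (fun H : G.Subgraph => (H.verts, H.Adj))
  intro H H' h
  simp only [Prod.mk.injEq] at h
  exact SimpleGraph.Subgraph.ext h.1 h.2

variable {V : Type*} [Fintype V] (G : SimpleGraph V)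

/-- The set of cycle subgraphs containing the path `w 1, …, w t`. -/
def CycSet (t : ℕ) (w : ℕ → V) : Set G.Subgraph :=
  {H | H.IsCycleSub ∧ (∀ i, 1 ≤ i → i ≤ t → w i ∈ H.verts) ∧
      ∀ i, 1 ≤ i → i < t → H.Adj (w i) (w (i + 1))}

/-- `f(w₁,…,w_j)`. -/
noncomputable def fdeg (w : ℕ → V) (j : ℕ) : ℕ :=
  max (G.neighborSet (w j) \ (w '' {i | 2 ≤ i ∧ i ≤ j - 1})).ncard 1

/-- The set of products over extensions of a path. -/
def MSet (n t : ℕ) (w : ℕ → V) : Set ℕ :=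
  {P | ∃ s, t ≤ s ∧ s ≤ n ∧ ∃ w' : ℕ → V, (∀ i, i ≤ t → w' i = w i) ∧
    (∀ j, t + 1 ≤ j → j ≤ s →
      w' j ∈ G.neighborSet (w' (j - 1)) \ (w' '' {i | 1 ≤ i ∧ i ≤ j - 2})) ∧
    P = ∏ j ∈ Finset.Icc t s, fdeg G w' j}

lemma fdeg_pos (w : ℕ → V) (j : ℕ) : 1 ≤ fdeg G w j := le_max_right _ _

lemma fdeg_le (n : ℕ) (hcard : Fintype.card V = n) (hn : 1 ≤ n) (w : ℕ → V) (j : ℕ) :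
    fdeg G w j ≤ n := by
  have h1 : (G.neighborSet (w j) \ (w '' {i | 2 ≤ i ∧ i ≤ j - 1})).ncard ≤ n := by
    calc _ ≤ (Set.univ : Set V).ncard := Set.ncard_le_ncard (Set.subset_univ _) (Set.toFinite _)
    _ = n := by rw [Set.ncard_univ, Nat.card_eq_fintype_card, hcard]
  exact max_le h1 hn

lemma fdeg_congr (w w' : ℕ → V) (j : ℕ) (h : ∀ i, i ≤ j → w' i = w i) :
    fdeg G w' j = fdeg G w j := by
  unfold fdeg
  rw [h j le_rfl]
  have himg : w' '' {i | 2 ≤ i ∧ i ≤ j - 1} = w '' {i | 2 ≤ i ∧ i ≤ j - 1} :=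
    Set.image_congr (fun i hi => h i (by simp only [Set.mem_setOf_eq] at hi; omega))
  rw [himg]

lemma prod_fdeg_le (n : ℕ) (hcard : Fintype.card V = n) (hn : 1 ≤ n) (t s : ℕ) (ht : 1 ≤ t)
    (hs : s ≤ n) (w' : ℕ → V) : ∏ j ∈ Finset.Icc t s, fdeg G w' j ≤ n ^ n := by
  calc ∏ j ∈ Finset.Icc t s, fdeg G w' j ≤ n ^ (Finset.Icc t s).card :=
        Finset.prod_le_pow_card _ _ _ (fun j _ => fdeg_le G n hcard hn w' j)
  _ ≤ n ^ n := Nat.pow_le_pow_right hn (by rw [Nat.card_Icc]; omega)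

lemma mset_le_pow (n t : ℕ) (hcard : Fintype.card V = n) (hn : 1 ≤ n) (ht : 1 ≤ t)
    (w : ℕ → V) : ∀ P ∈ MSet G n t w, P ≤ n ^ n := by
  rintro P ⟨s, hts, hsn, w', -, -, rfl⟩
  exact prod_fdeg_le G n hcard hn t s ht hsn w'

lemma mset_bddAbove (n t : ℕ) (hcard : Fintype.card V = n) (hn : 1 ≤ n) (ht : 1 ≤ t)
    (w : ℕ → V) : BddAbove (MSet G n t w) :=
  ⟨n ^ n, mset_le_pow G n t hcard hn ht w⟩

lemma mset_self_mem (n t : ℕ) (ht : t ≤ n) (w : ℕ → V) : fdeg G w t ∈ MSet G n t w := by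
  refine ⟨t, le_rfl, ht, w, fun _ _ => rfl, fun j hj hj' => by omega, ?_⟩
  rw [Finset.Icc_self, Finset.prod_singleton]

lemma one_le_sSup_mset (n t : ℕ) (hcard : Fintype.card V = n) (hn : 1 ≤ n) (ht1 : 1 ≤ t)
    (ht : t ≤ n) (w : ℕ → V) : fdeg G w t ≤ sSup (MSet G n t w) :=
  le_csSup (mset_bddAbove G n t hcard hn ht1 w) (mset_self_mem G n t ht w)

lemma three_le_ncard {α : Type*} {s : Set α} (hs : s.Finite) {a b c : α}
    (ha : a ∈ s) (hb : b ∈ s) (hc : c ∈ s) (hab : a ≠ b) (hac : a ≠ c) (hbc : b ≠ c) :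
    3 ≤ s.ncard := by
  have h : ({a, b, c} : Set α).ncard = 3 := by
    rw [Set.ncard_insert_of_notMem (by simp [hab, hac]) (Set.toFinite _), Set.ncard_pair hbc]
  rw [← h]
  exact Set.ncard_le_ncard (by intro x hx; rcases hx with rfl | rfl | rfl <;> assumption) hs

-- The neighbour of `x` in `H` other than `y` (junk if not well-defined).
open scoped Classical in
noncomputable def nxt (H : G.Subgraph) (x y : V) : V :=
  if h : (H.neighborSet x \ {y}).Nonempty then h.choose else x

lemma nxt_spec {H : G.Subgraph} {x : V} (y : V) (h2 : (H.neighborSet x).ncard = 2) :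
    H.Adj x (nxt G H x y) ∧ nxt G H x y ≠ y := by
  have hne : (H.neighborSet x \ {y}).Nonempty := by
    rw [Set.nonempty_iff_ne_empty]
    intro hemp
    have hsub : H.neighborSet x ⊆ {y} := by
      intro z hz
      by_contra hzy
      exact Set.eq_empty_iff_forall_notMem.mp hemp z ⟨hz, hzy⟩
    have := Set.ncard_le_ncard hsub (Set.toFinite _)
    simp [h2] at this
  classical
  rw [nxt]
  rw [dif_pos hne]
  have := hne.choose_spec
  exact ⟨this.1, this.2⟩

lemma count_le {α β : Type*} (s : Set α) (g : α → β) (D : Set β) (B : ℕ)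
    (hfin : s.Finite) (hDfin : D.Finite) (hmap : ∀ a ∈ s, g a ∈ D)
    (hfib : ∀ b ∈ D, {a ∈ s | g a = b}.ncard ≤ B) :
    s.ncard ≤ D.ncard * B := by
  classical
  rw [Set.ncard_eq_toFinset_card s hfin]
  have key : hfin.toFinset.card ≤ B * (Finset.image g hfin.toFinset).card := by
    apply Finset.card_le_mul_card_image
    intro b hb
    obtain ⟨a, ha, rfl⟩ := Finset.mem_image.mp hb
    have hbD : g a ∈ D := hmap a (hfin.mem_toFinset.mp ha)
    have heq : ((hfin.toFinset.filter (fun x => g x = g a)) : Set α)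
        = {x ∈ s | g x = g a} := by
      ext x; simp [Set.Finite.mem_toFinset]
    calc (hfin.toFinset.filter (fun x => g x = g a)).card
        = ({x ∈ s | g x = g a} : Set α).ncard := by rw [← heq, Set.ncard_coe_finset]
      _ ≤ B := hfib _ hbD
  calc hfin.toFinset.card ≤ B * (Finset.image g hfin.toFinset).card := key
    _ ≤ B * D.ncard := by
        apply Nat.mul_le_mul_left
        rw [← Set.ncard_coe_finset]
        apply Set.ncard_le_ncard _ hDfin
        intro b hb
        obtain ⟨a, ha, rfl⟩ := Finset.mem_image.mp (by exact_mod_cast hb)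
        exact hmap a (hfin.mem_toFinset.mp ha)
    _ = D.ncard * B := Nat.mul_comm _ _

lemma next_not_middle (t : ℕ) (w : ℕ → V)
    (hinj : ∀ i j, 1 ≤ i → i ≤ t → 1 ≤ j → j ≤ t → w i = w j → i = j)
    {H : G.Subgraph} (hH : H ∈ CycSet G t w) (ht1 : 1 ≤ t)
    {u : V} (hu : H.Adj (w t) u) (hul : 2 ≤ t → u ≠ w (t - 1)) :
    ∀ i, 2 ≤ i → i ≤ t - 1 → u ≠ w i := by
  intro i h2 hle hui
  rcases Nat.lt_or_ge i (t - 1) with hi | hi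
  · -- middle vertex: three distinct neighbours
    have ht3 : 3 ≤ t := by omega
    have hn1 : H.Adj (w i) (w (i - 1)) := by
      have := hH.2.2 (i - 1) (by omega) (by omega)
      rw [show i - 1 + 1 = i by omega] at this
      exact this.symm
    have hn2 : H.Adj (w i) (w (i + 1)) := hH.2.2 i (by omega) (by omega)
    have hn3 : H.Adj (w i) (w t) := by rw [← hui]; exact hu.symm
    have hd12 : w (i - 1) ≠ w (i + 1) := fun h =>
      by have := hinj (i - 1) (i + 1) (by omega) (by omega) (by omega) (by omega) h; omega
    have hd13 : w (i - 1) ≠ w t := fun h =>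
      by have := hinj (i - 1) t (by omega) (by omega) (by omega) le_rfl h; omega
    have hd23 : w (i + 1) ≠ w t := fun h =>
      by have := hinj (i + 1) t (by omega) (by omega) (by omega) le_rfl h; omega
    have h3 : 3 ≤ (H.neighborSet (w i)).ncard :=
      three_le_ncard (Set.toFinite _) hn1 hn2 hn3 hd12 hd13 hd23
    rw [hH.1.2 (w i) (hH.2.1 i (by omega) (by omega))] at h3
    omega
  · have hit : i = t - 1 := by omega
    exact hul (by omega) (by rw [hui, hit])

lemma cyc_adj_prev (t : ℕ) (ht3 : 3 ≤ t) (w : ℕ → V)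
    {H : G.Subgraph} (hH : H ∈ CycSet G t w) (hcl : H.Adj (w t) (w 1))
    {i : ℕ} (h1 : 1 ≤ i) (h2 : i ≤ t) :
    H.Adj (w i) (w (if i = 1 then t else i - 1)) := by
  split_ifs with h
  · rw [h]; exact hcl.symm
  · have := hH.2.2 (i - 1) (by omega) (by omega)
    rw [show i - 1 + 1 = i by omega] at this
    exact this.symm

lemma cyc_adj_next (t : ℕ) (ht3 : 3 ≤ t) (w : ℕ → V)
    {H : G.Subgraph} (hH : H ∈ CycSet G t w) (hcl : H.Adj (w t) (w 1))
    {i : ℕ} (h1 : 1 ≤ i) (h2 : i ≤ t) :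
    H.Adj (w i) (w (if i = t then 1 else i + 1)) := by
  split_ifs with h
  · rw [h]; exact hcl
  · exact hH.2.2 i h1 (by omega)

lemma nbhd_closed (t : ℕ) (ht3 : 3 ≤ t) (w : ℕ → V)
    (hinj : ∀ i j, 1 ≤ i → i ≤ t → 1 ≤ j → j ≤ t → w i = w j → i = j)
    {H : G.Subgraph} (hH : H ∈ CycSet G t w) (hcl : H.Adj (w t) (w 1))
    {i : ℕ} (h1 : 1 ≤ i) (h2 : i ≤ t) :
    H.neighborSet (w i) = {w (if i = 1 then t else i - 1), w (if i = t then 1 else i + 1)} := by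
  have hprev := cyc_adj_prev G t ht3 w hH hcl h1 h2
  have hnext := cyc_adj_next G t ht3 w hH hcl h1 h2
  have hne : w (if i = 1 then t else i - 1) ≠ w (if i = t then 1 else i + 1) := by
    intro heq
    have := hinj (if i = 1 then t else i - 1) (if i = t then 1 else i + 1)
      (by split_ifs <;> omega) (by split_ifs <;> omega)
      (by split_ifs <;> omega) (by split_ifs <;> omega) heq
    split_ifs at this <;> omega
  refine (Set.eq_of_subset_of_ncard_le ?_ ?_ (Set.toFinite _)).symm
  · intro z hz
    rcases hz with rfl | rfl
    · exact hprev
    · exact hnext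
  · rw [hH.1.2 (w i) (hH.2.1 i h1 h2), Set.ncard_pair hne]

lemma verts_closed (t : ℕ) (ht3 : 3 ≤ t) (w : ℕ → V)
    (hinj : ∀ i j, 1 ≤ i → i ≤ t → 1 ≤ j → j ≤ t → w i = w j → i = j)
    {H : G.Subgraph} (hH : H ∈ CycSet G t w) (hcl : H.Adj (w t) (w 1)) :
    H.verts = w '' {i | 1 ≤ i ∧ i ≤ t} := by
  apply Set.Subset.antisymm
  · intro x hx
    have hw1 : w 1 ∈ H.verts := hH.2.1 1 le_rfl (by omega)
    obtain ⟨p⟩ := hH.1.1.preconnected ⟨w 1, hw1⟩ ⟨x, hx⟩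
    have key : ∀ (a b : H.verts) (_ : H.coe.Walk a b),
        a.1 ∈ w '' {i | 1 ≤ i ∧ i ≤ t} → b.1 ∈ w '' {i | 1 ≤ i ∧ i ≤ t} := by
      intro a b p
      induction p with
      | nil => exact id
      | @cons a c b h q ihq =>
        intro ha
        apply ihq
        obtain ⟨i, ⟨hi1, hi2⟩, hwi⟩ := ha
        have hadj : H.Adj a.1 c.1 := h
        have hc : c.1 ∈ H.neighborSet (w i) := by rw [hwi]; exact hadj
        rw [nbhd_closed G t ht3 w hinj hH hcl hi1 hi2] at hc
        rcases hc with hc | hc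
        · exact ⟨_, ⟨by split_ifs <;> omega, by split_ifs <;> omega⟩, hc.symm⟩
        · exact ⟨_, ⟨by split_ifs <;> omega, by split_ifs <;> omega⟩, hc.symm⟩
    exact key _ _ p ⟨1, ⟨le_rfl, by omega⟩, rfl⟩
  · rintro x ⟨i, ⟨hi1, hi2⟩, rfl⟩
    exact hH.2.1 i hi1 hi2

lemma closed_unique (t : ℕ) (ht3 : 3 ≤ t) (w : ℕ → V)
    (hinj : ∀ i j, 1 ≤ i → i ≤ t → 1 ≤ j → j ≤ t → w i = w j → i = j)
    {H H' : G.Subgraph} (hH : H ∈ CycSet G t w) (hH' : H' ∈ CycSet G t w)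
    (hcl : H.Adj (w t) (w 1)) (hcl' : H'.Adj (w t) (w 1)) : H = H' := by
  have key : ∀ (A B : G.Subgraph), A ∈ CycSet G t w → B ∈ CycSet G t w →
      A.Adj (w t) (w 1) → B.Adj (w t) (w 1) → ∀ x y, A.Adj x y → B.Adj x y := by
    intro A B hA hB hclA hclB x y hxy
    have hx : x ∈ A.verts := hxy.fst_mem
    rw [verts_closed G t ht3 w hinj hA hclA] at hx
    obtain ⟨i, ⟨hi1, hi2⟩, rfl⟩ := hx
    have hy : y ∈ A.neighborSet (w i) := hxy
    rw [nbhd_closed G t ht3 w hinj hA hclA hi1 hi2] at hy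
    rcases hy with rfl | rfl
    · exact cyc_adj_prev G t ht3 w hB hclB hi1 hi2
    · exact cyc_adj_next G t ht3 w hB hclB hi1 hi2
  refine SimpleGraph.Subgraph.ext ?_ ?_
  · rw [verts_closed G t ht3 w hinj hH hcl, verts_closed G t ht3 w hinj hH' hcl']
  · funext x y
    exact propext ⟨key H H' hH hH' hcl hcl' x y, key H' H hH' hH hcl' hcl x y⟩

lemma img_ncard (t : ℕ) (w : ℕ → V)
    (hinj : ∀ i j, 1 ≤ i → i ≤ t → 1 ≤ j → j ≤ t → w i = w j → i = j) :
    (w '' {i | 1 ≤ i ∧ i ≤ t}).ncard = t := by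
  rw [Set.ncard_image_of_injOn (fun i hi j hj hij => hinj i j hi.1 hi.2 hj.1 hj.2 hij)]
  have h : {i : ℕ | 1 ≤ i ∧ i ≤ t} = Set.Icc 1 t := by ext; simp [Set.mem_Icc]
  rw [h, Set.ncard_eq_toFinset_card']
  simp

lemma cyc_closes (t : ℕ) (ht1 : 1 ≤ t) (w : ℕ → V)
    (hinj : ∀ i j, 1 ≤ i → i ≤ t → 1 ≤ j → j ≤ t → w i = w j → i = j)
    {H : G.Subgraph} (hH : H ∈ CycSet G t w)
    (himg : nxt G H (w t) (w (t - 1)) ∈ w '' {i | 1 ≤ i ∧ i ≤ t - 1}) :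
    3 ≤ t ∧ H.Adj (w t) (w 1) := by
  obtain ⟨hadjH, hneH⟩ := nxt_spec G (w (t - 1)) (hH.1.2 (w t) (hH.2.1 t ht1 le_rfl))
  obtain ⟨i, ⟨hi1, hi2⟩, hwi⟩ := himg
  have hmid := next_not_middle G t w hinj hH ht1 hadjH (fun _ => hneH)
  have hieq : i = 1 := by
    by_contra hne
    exact hmid i (by omega) hi2 hwi.symm
  subst hieq
  have ht2 : 2 ≤ t := by omega
  have ht3 : 3 ≤ t := by
    rcases Nat.lt_or_ge t 3 with h | h
    · exfalso
      have h11 : t - 1 = 1 := by omega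
      exact hneH (hwi.symm.trans (congrArg w h11).symm)
    · exact h
  exact ⟨ht3, by rw [hwi]; exact hadjH⟩

lemma cyc_empty_F (t : ℕ) (ht1 : 1 ≤ t) (w : ℕ → V)
    (hinj : ∀ i j, 1 ≤ i → i ≤ t → 1 ≤ j → j ≤ t → w i = w j → i = j)
    (hFe : G.neighborSet (w t) \ (w '' {i | 1 ≤ i ∧ i ≤ t - 1}) = ∅) :
    (CycSet G t w).ncard ≤ 1 := by
  haveI : Finite G.Subgraph := subgraph_finite G
  rw [Set.ncard_le_one (Set.toFinite _)]
  intro H hH H' hH'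
  have hcl : ∀ A, A ∈ CycSet G t w → 3 ≤ t ∧ A.Adj (w t) (w 1) := by
    intro A hA
    apply cyc_closes G t ht1 w hinj hA
    obtain ⟨hadjA, hneA⟩ := nxt_spec G (w (t - 1)) (hA.1.2 (w t) (hA.2.1 t ht1 le_rfl))
    by_contra hni
    have : nxt G A (w t) (w (t - 1)) ∈ G.neighborSet (w t) \ (w '' {i | 1 ≤ i ∧ i ≤ t - 1}) :=
      ⟨hadjA.adj_sub, hni⟩
    rw [hFe] at this
    exact this
  obtain ⟨ht3, hclH⟩ := hcl H hH
  obtain ⟨-, hclH'⟩ := hcl H' hH'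
  exact closed_unique G t ht3 w hinj hH hH' hclH hclH'

lemma main (n : ℕ) (hn : 2 ≤ n) (hcard : Fintype.card V = n) :
    ∀ (d t : ℕ) (w : ℕ → V), n ≤ t + d → 1 ≤ t → t ≤ n →
    (∀ i j, 1 ≤ i → i ≤ t → 1 ≤ j → j ≤ t → w i = w j → i = j) →
    (∀ i, 1 ≤ i → i < t → G.Adj (w i) (w (i + 1))) →
    (CycSet G t w).ncard ≤ sSup (MSet G n t w) := by
  have hn1 : 1 ≤ n := by omega
  haveI : Finite G.Subgraph := subgraph_finite G
  intro d
  induction d with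
  | zero =>
    intro t w hd ht1 htn hinj hadj
    have htn' : t = n := by omega
    have hsurj : w '' {i | 1 ≤ i ∧ i ≤ t} = Set.univ := by
      apply Set.eq_of_subset_of_ncard_le (Set.subset_univ _) ?_ (Set.toFinite _)
      rw [img_ncard t w hinj, Set.ncard_univ, Nat.card_eq_fintype_card, hcard]
      omega
    have hFe : G.neighborSet (w t) \ (w '' {i | 1 ≤ i ∧ i ≤ t - 1}) = ∅ := by
      ext u
      simp only [Set.mem_diff, Set.mem_empty_iff_false, iff_false, not_and, not_not]
      intro hN
      have hu : u ∈ w '' {i | 1 ≤ i ∧ i ≤ t} := by rw [hsurj]; exact Set.mem_univ u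
      obtain ⟨i, ⟨hi1, hi2⟩, hwi⟩ := hu
      have hit : i ≠ t := by
        intro h
        subst h
        exact G.ne_of_adj hN (hwi.symm ▸ rfl)
      exact ⟨i, ⟨hi1, by omega⟩, hwi⟩
    calc (CycSet G t w).ncard ≤ 1 := cyc_empty_F G t ht1 w hinj hFe
      _ ≤ fdeg G w t := fdeg_pos G w t
      _ ≤ sSup (MSet G n t w) := one_le_sSup_mset G n t hcard hn1 ht1 htn w
  | succ d ih =>
    intro t w hd ht1 htn hinj hadj
    by_cases hFe : G.neighborSet (w t) \ (w '' {i | 1 ≤ i ∧ i ≤ t - 1}) = ∅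
    · calc (CycSet G t w).ncard ≤ 1 := cyc_empty_F G t ht1 w hinj hFe
        _ ≤ fdeg G w t := fdeg_pos G w t
        _ ≤ sSup (MSet G n t w) := one_le_sSup_mset G n t hcard hn1 ht1 htn w
    · obtain ⟨u₀, hu₀⟩ := Set.nonempty_iff_ne_empty.mpr hFe
      have hnotin : ∀ u : V, u ∈ G.neighborSet (w t) →
          u ∉ w '' {i | 1 ≤ i ∧ i ≤ t - 1} → ∀ i, 1 ≤ i → i ≤ t → u ≠ w i := by
        intro u hN hni i hi1 hi2 hwi
        have hit : i ≠ t := by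
          intro h
          subst h
          exact G.ne_of_adj hN hwi.symm
        exact hni ⟨i, ⟨hi1, by omega⟩, hwi.symm⟩
      have htlt : t < n := by
        have hins : (insert u₀ (w '' {i | 1 ≤ i ∧ i ≤ t})).ncard = t + 1 := by
          rw [Set.ncard_insert_of_notMem ?_ (Set.toFinite _), img_ncard t w hinj]
          rintro ⟨i, ⟨hi1, hi2⟩, hwi⟩
          exact hnotin u₀ hu₀.1 hu₀.2 i hi1 hi2 hwi.symm
        have hle : (insert u₀ (w '' {i | 1 ≤ i ∧ i ≤ t})).ncard ≤ n := by
          calc _ ≤ (Set.univ : Set V).ncard :=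
                Set.ncard_le_ncard (Set.subset_univ _) (Set.toFinite _)
            _ = n := by rw [Set.ncard_univ, Nat.card_eq_fintype_card, hcard]
        omega
      set g : G.Subgraph → V := fun H => nxt G H (w t) (w (t - 1)) with hg
      have hgspec : ∀ H ∈ CycSet G t w, H.Adj (w t) (g H) ∧ g H ≠ w (t - 1) := fun H hH =>
        nxt_spec G (w (t - 1)) (hH.1.2 (w t) (hH.2.1 t ht1 le_rfl))
      set D := G.neighborSet (w t) \ (w '' {i | 2 ≤ i ∧ i ≤ t - 1}) with hD
      have hmap : ∀ H ∈ CycSet G t w, g H ∈ D := by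
        intro H hH
        obtain ⟨hadjH, hneH⟩ := hgspec H hH
        refine ⟨hadjH.adj_sub, ?_⟩
        rintro ⟨i, ⟨hi2, hi1⟩, hwi⟩
        exact next_not_middle G t w hinj hH ht1 hadjH (fun _ => hneH) i hi2 hi1 hwi.symm
      set BS : Set ℕ := insert 1
          ((fun u => sSup (MSet G n (t + 1) (fun i => if i = t + 1 then u else w i))) ''
            (G.neighborSet (w t) \ (w '' {i | 1 ≤ i ∧ i ≤ t - 1}))) with hBS
      have hBSbdd : BddAbove BS := by
        refine ⟨n ^ n, ?_⟩
        rintro b hb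
        rcases Set.mem_insert_iff.mp hb with rfl | ⟨u, hu, rfl⟩
        · exact Nat.one_le_pow n n (by omega)
        · exact csSup_le' (mset_le_pow G n (t + 1) hcard hn1 (by omega) _)
      set B := sSup BS with hB
      have hBmem : B ∈ BS := Nat.sSup_mem ⟨1, Set.mem_insert 1 _⟩ hBSbdd
      have hfib : ∀ u ∈ D, {H ∈ CycSet G t w | g H = u}.ncard ≤ B := by
        intro u huD
        by_cases huw1 : u = w 1
        · have hle1 : {H ∈ CycSet G t w | g H = u}.ncard ≤ 1 := by
            rw [Set.ncard_le_one (Set.toFinite _)]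
            rintro A ⟨hA, hgA⟩ A' ⟨hA', hgA'⟩
            have ht2 : 2 ≤ t := by
              by_contra h
              have ht1' : t = 1 := by omega
              have hAd := (hgspec A hA).1.adj_sub
              have hgA1 : g A = w 1 := hgA.trans huw1
              rw [hgA1, ht1'] at hAd
              exact G.ne_of_adj hAd rfl
            have hm : (1:ℕ) ≤ t - 1 := by omega
            have hclA : 3 ≤ t ∧ A.Adj (w t) (w 1) :=
              cyc_closes G t ht1 w hinj hA ⟨1, ⟨le_rfl, hm⟩, (hgA.trans huw1).symm⟩
            have hclA' : 3 ≤ t ∧ A'.Adj (w t) (w 1) :=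
              cyc_closes G t ht1 w hinj hA' ⟨1, ⟨le_rfl, hm⟩, (hgA'.trans huw1).symm⟩
            exact closed_unique G t hclA.1 w hinj hA hA' hclA.2 hclA'.2
          exact hle1.trans (le_csSup hBSbdd (Set.mem_insert 1 _))
        · rcases Set.eq_empty_or_nonempty {H ∈ CycSet G t w | g H = u} with hememp | ⟨H₀, hH₀, hgH₀⟩
          · rw [hememp]; simp
          · have huF : u ∈ G.neighborSet (w t) \ (w '' {i | 1 ≤ i ∧ i ≤ t - 1}) := by
              refine ⟨huD.1, ?_⟩
              rintro ⟨i, ⟨hi1, hi2⟩, hwi⟩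
              rcases Nat.eq_or_lt_of_le hi1 with h1 | h1
              · exact huw1 (by rw [← hwi, ← h1])
              · exact huD.2 ⟨i, ⟨by omega, hi2⟩, hwi⟩
            have hune : ∀ i, 1 ≤ i → i ≤ t → u ≠ w i := hnotin u huF.1 huF.2
            set w' : ℕ → V := fun i => if i = t + 1 then u else w i with hw'
            have hw'eq : ∀ i, i ≤ t → w' i = w i := by
              intro i hi
              simp only [hw']
              rw [if_neg (by omega)]
            have hsub : {H ∈ CycSet G t w | g H = u} ⊆ CycSet G (t + 1) w' := by
              rintro H ⟨hH, hgH⟩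
              refine ⟨hH.1, ?_, ?_⟩
              · intro i hi1 hi2
                by_cases hit : i = t + 1
                · rw [hit, show w' (t + 1) = u from if_pos rfl, ← hgH]
                  exact (hgspec H hH).1.snd_mem
                · rw [hw'eq i (by omega)]
                  exact hH.2.1 i hi1 (by omega)
              · intro i hi1 hi2
                by_cases hit : i = t
                · rw [hit, hw'eq t le_rfl, show w' (t + 1) = u from if_pos rfl, ← hgH]
                  exact (hgspec H hH).1
                · rw [hw'eq i (by omega), hw'eq (i + 1) (by omega)]
                  exact hH.2.2 i hi1 (by omega)
            have hinj' : ∀ i j, 1 ≤ i → i ≤ t + 1 → 1 ≤ j → j ≤ t + 1 → w' i = w' j → i = j := by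
              intro i j hi1 hi2 hj1 hj2 hij
              by_cases hit : i = t + 1 <;> by_cases hjt : j = t + 1
              · omega
              · exfalso
                rw [hit, show w' (t + 1) = u from if_pos rfl, hw'eq j (by omega)] at hij
                exact hune j hj1 (by omega) hij
              · exfalso
                rw [hjt, show w' (t + 1) = u from if_pos rfl, hw'eq i (by omega)] at hij
                exact hune i hi1 (by omega) hij.symm
              · rw [hw'eq i (by omega), hw'eq j (by omega)] at hij
                exact hinj i j hi1 (by omega) hj1 (by omega) hij
            have hadj' : ∀ i, 1 ≤ i → i < t + 1 → G.Adj (w' i) (w' (i + 1)) := by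
              intro i hi1 hi2
              by_cases hit : i = t
              · rw [hit, hw'eq t le_rfl, show w' (t + 1) = u from if_pos rfl]
                exact huF.1
              · rw [hw'eq i (by omega), hw'eq (i + 1) (by omega)]
                exact hadj i hi1 (by omega)
            calc {H ∈ CycSet G t w | g H = u}.ncard
                ≤ (CycSet G (t + 1) w').ncard := Set.ncard_le_ncard hsub (Set.toFinite _)
              _ ≤ sSup (MSet G n (t + 1) w') :=
                  ih (t + 1) w' (by omega) (by omega) (by omega) hinj' hadj'
              _ ≤ B := le_csSup hBSbdd (Set.mem_insert_of_mem 1 ⟨u, huF, rfl⟩)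
      have hcount : (CycSet G t w).ncard ≤ D.ncard * B :=
        count_le _ g D B (Set.toFinite _) (Set.toFinite _) hmap hfib
      have hDf : D.ncard ≤ fdeg G w t := le_max_left _ _
      rcases Set.mem_insert_iff.mp hBmem with hB1 | ⟨u, huF, hBu⟩
      · calc (CycSet G t w).ncard ≤ D.ncard * B := hcount
          _ = D.ncard := by rw [hB1, Nat.mul_one]
          _ ≤ fdeg G w t := hDf
          _ ≤ sSup (MSet G n t w) := one_le_sSup_mset G n t hcard hn1 ht1 htn w
      · set w' : ℕ → V := fun i => if i = t + 1 then u else w i with hw'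
        have hw'eq : ∀ i, i ≤ t → w' i = w i := by
          intro i hi
          simp only [hw']
          rw [if_neg (by omega)]
        have hBmem' : B ∈ MSet G n (t + 1) w' := by
          rw [← hBu]
          exact Nat.sSup_mem ⟨_, mset_self_mem G n (t + 1) (by omega) _⟩
            (mset_bddAbove G n (t + 1) hcard hn1 (by omega) _)
        obtain ⟨s, hts, hsn, w'', hw''eq, hw''F, hBprod⟩ := hBmem'
        have hw''eqt : ∀ i, i ≤ t → w'' i = w i := by
          intro i hi
          rw [hw''eq i (by omega), hw'eq i hi]
        have hmem : fdeg G w t * B ∈ MSet G n t w := by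
          refine ⟨s, by omega, hsn, w'', hw''eqt, ?_, ?_⟩
          · intro j hj1 hj2
            rcases Nat.eq_or_lt_of_le hj1 with h1 | h1
            · rw [← h1]
              have e1 : w'' (t + 1) = u := by
                rw [hw''eq (t + 1) le_rfl]
                simp [hw']
              have e2 : w'' (t + 1 - 1) = w t := by
                rw [show t + 1 - 1 = t from rfl, hw''eqt t le_rfl]
              rw [e1, e2]
              refine ⟨huF.1, ?_⟩
              rintro ⟨i, ⟨hi1, hi2⟩, hwi⟩
              rw [hw''eqt i (by omega)] at hwi
              exact huF.2 ⟨i, ⟨hi1, by omega⟩, hwi⟩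
            · exact hw''F j (by omega) hj2
          · rw [hBprod]
            have hsplit : Finset.Icc t s = insert t (Finset.Icc (t + 1) s) := by
              ext x
              simp only [Finset.mem_Icc, Finset.mem_insert]
              omega
            rw [hsplit, Finset.prod_insert (by simp)]
            rw [fdeg_congr G w w'' t hw''eqt]
        calc (CycSet G t w).ncard ≤ D.ncard * B := hcount
          _ ≤ fdeg G w t * B := Nat.mul_le_mul_right B hDf
          _ ≤ sSup (MSet G n t w) :=
              le_csSup (mset_bddAbove G n t hcard hn1 ht1 w) hmem

end CyclesAux

theorem cycles_through_path_le {V : Type*} [Fintype V] (G : SimpleGraph V)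
    (n : ℕ) (hn : 2 ≤ n) (hcard : Fintype.card V = n)
    (k : ℕ) (hk1 : 1 ≤ k) (hkn : k ≤ n - 1)
    (v : ℕ → V)
    (hadj : ∀ i, 1 ≤ i → i < k → G.Adj (v i) (v (i + 1)))
    (hinj : ∀ i j, 1 ≤ i → i ≤ k → 1 ≤ j → j ≤ k → v i = v j → i = j)
    (hF : (G.neighborSet (v k) \ (v '' {i | 1 ≤ i ∧ i ≤ k - 1})).Nonempty) :
    {H : G.Subgraph | H.IsCycleSub ∧ (∀ i, 1 ≤ i → i ≤ k → v i ∈ H.verts) ∧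
        ∀ i, 1 ≤ i → i < k → H.Adj (v i) (v (i + 1))}.ncard ≤
      (max (G.neighborSet (v k) \ (v '' {i | 2 ≤ i ∧ i ≤ k - 1})).ncard 1) *
        sSup {P : ℕ | ∃ t, k + 1 ≤ t ∧ t ≤ n ∧ ∃ w : ℕ → V,
          (∀ i, i ≤ k → w i = v i) ∧
          (∀ j, k + 1 ≤ j → j ≤ t →
            w j ∈ G.neighborSet (w (j - 1)) \ (w '' {i | 1 ≤ i ∧ i ≤ j - 2})) ∧
          P = ∏ j ∈ Finset.Icc (k + 1) t,
            max (G.neighborSet (w j) \ (w '' {i | 2 ≤ i ∧ i ≤ j - 1})).ncard 1} := by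
  
  classical
  have hn1 : 1 ≤ n := by omega
  have hknn : k ≤ n := by omega
  have hmain : (CyclesAux.CycSet G k v).ncard ≤ sSup (CyclesAux.MSet G n k v) :=
    CyclesAux.main G n hn hcard n k v (by omega) hk1 hknn hinj hadj
  refine le_trans hmain ?_
  set S := {P : ℕ | ∃ t, k + 1 ≤ t ∧ t ≤ n ∧ ∃ w : ℕ → V,
      (∀ i, i ≤ k → w i = v i) ∧
      (∀ j, k + 1 ≤ j → j ≤ t →
        w j ∈ G.neighborSet (w (j - 1)) \ (w '' {i | 1 ≤ i ∧ i ≤ j - 2})) ∧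
      P = ∏ j ∈ Finset.Icc (k + 1) t,
        max (G.neighborSet (w j) \ (w '' {i | 2 ≤ i ∧ i ≤ j - 1})).ncard 1} with hS
  have hSbdd : BddAbove S := by
    refine ⟨n ^ n, ?_⟩
    rintro P ⟨t, h1, h2, w, -, -, rfl⟩
    exact CyclesAux.prod_fdeg_le G n hcard hn1 (k + 1) t (by omega) h2 w
  have h1S : 1 ≤ sSup S := by
    obtain ⟨u, huN, huI⟩ := hF
    set w1 : ℕ → V := fun i => if i = k + 1 then u else v i with hw1
    have hw1eq : ∀ i, i ≤ k → w1 i = v i := by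
      intro i hi
      simp only [hw1]
      rw [if_neg (by omega)]
    have hP : (∏ j ∈ Finset.Icc (k + 1) (k + 1),
        max (G.neighborSet (w1 j) \ (w1 '' {i | 2 ≤ i ∧ i ≤ j - 1})).ncard 1) ∈ S := by
      refine ⟨k + 1, le_rfl, by omega, w1, hw1eq, ?_, rfl⟩
      intro j hj1 hj2
      have hj : j = k + 1 := by omega
      subst hj
      have e1 : w1 (k + 1) = u := by simp [hw1]
      have e2 : w1 (k + 1 - 1) = v k := by
        rw [show k + 1 - 1 = k from rfl, hw1eq k le_rfl]
      rw [e1, e2]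
      refine ⟨huN, ?_⟩
      rintro ⟨i, ⟨hi1, hi2⟩, hwi⟩
      rw [hw1eq i (by omega)] at hwi
      exact huI ⟨i, ⟨hi1, by omega⟩, hwi⟩
    calc (1 : ℕ) ≤ ∏ j ∈ Finset.Icc (k + 1) (k + 1),
          max (G.neighborSet (w1 j) \ (w1 '' {i | 2 ≤ i ∧ i ≤ j - 1})).ncard 1 := by
          rw [Finset.Icc_self, Finset.prod_singleton]
          exact le_max_right _ _
      _ ≤ sSup S := le_csSup hSbdd hP
  apply csSup_le'
  rintro P ⟨s, hks, hsn, w', hw'eq, hw'F, rfl⟩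
  rcases Nat.eq_or_lt_of_le hks with h1 | h1
  · subst h1
    rw [Finset.Icc_self, Finset.prod_singleton, CyclesAux.fdeg_congr G v w' k hw'eq]
    show CyclesAux.fdeg G v k ≤ CyclesAux.fdeg G v k * sSup S
    calc CyclesAux.fdeg G v k = CyclesAux.fdeg G v k * 1 := (Nat.mul_one _).symm
      _ ≤ CyclesAux.fdeg G v k * sSup S := Nat.mul_le_mul_left _ h1S
  · have hsplit : Finset.Icc k s = insert k (Finset.Icc (k + 1) s) := by
      ext x
      simp only [Finset.mem_Icc, Finset.mem_insert]
      omega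
    rw [hsplit, Finset.prod_insert (by simp), CyclesAux.fdeg_congr G v w' k hw'eq]
    show CyclesAux.fdeg G v k * _ ≤ CyclesAux.fdeg G v k * sSup S
    exact Nat.mul_le_mul_left _ (le_csSup hSbdd ⟨s, by omega, hsn, w', hw'eq, hw'F, rfl⟩)
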